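/- arXiv:1609.04594 — 2 statements merged into one kernel-verified Lean document; each statement's English description precedes it below -/
import Mathlib

section
/- (Proposition 3.4) Suppose a discrete form Ω : ℤ⁴ → Cl satisfies the discrete Joyce equation iDΩ = mΩe₀. Then Ω = ΩP_{+0} + ΩP_{−0}, where ΩP_{+0} satisfies the discrete Dirac–Kähler equation iD(ΩP_{+0}) = m(ΩP_{+0}), while ΩP_{−0} satisfies the same equation with reversed mass sign: iD(ΩP_{−0}) = −m(ΩP_{−0}). -/
noncomputable section

/-- The Minkowski quadratic form `Q v = v₀² − v₁² − v₂² − v₃²` on `ℂ⁴`. -/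
def Q : QuadraticForm ℂ (Fin 4 → ℂ) :=
  QuadraticMap.weightedSumSquares ℂ ![(1 : ℂ), -1, -1, -1]

/-- The Clifford algebra of spacetime over `ℂ`. -/
abbrev Cl : Type := CliffordAlgebra Q

/-- The generators `e_μ`, images of the standard basis vectors. -/
def e (μ : Fin 4) : Cl := CliffordAlgebra.ι Q (Pi.single μ 1)

/-- The volume element `e = e₀e₁e₂e₃`. -/
def eV : Cl := e 0 * e 1 * e 2 * e 3

/-- The difference operator `(Δ_μ Ω)(k) = Ω(k + 1_μ) − Ω(k)`. -/
def Δ (μ : Fin 4) (Ω : (Fin 4 → ℤ) → Cl) : (Fin 4 → ℤ) → Cl :=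
  fun k => Ω (k + Pi.single μ 1) - Ω k

/-- The discrete Dirac operator `DΩ = Σ_μ e_μ · (Δ_μ Ω)`. -/
def Dirac (Ω : (Fin 4 → ℤ) → Cl) : (Fin 4 → ℤ) → Cl :=
  fun k => ∑ μ : Fin 4, e μ * Δ μ Ω k

def P0p : Cl := (2⁻¹ : ℂ) • (1 + e 0)
def P0m : Cl := (2⁻¹ : ℂ) • (1 - e 0)


lemma e0_sq : e 0 * e 0 = 1 := by
  have h := CliffordAlgebra.ι_sq_scalar Q (Pi.single 0 (1:ℂ))
  have hQ : Q (Pi.single 0 (1:ℂ)) = 1 := by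
    simp [Q, QuadraticMap.weightedSumSquares_apply, Fin.sum_univ_four, Pi.single_apply]
  simp only [hQ, map_one] at h; simpa [e] using h

lemma Psum : P0p + P0m = 1 := by
  rw [P0p, P0m, ← smul_add]
  have : (1 + e 0) + (1 - e 0) = (2:ℂ) • (1:Cl) := by
    rw [two_smul]; abel
  rw [this, smul_smul]; norm_num

lemma e0_Pp : e 0 * P0p = P0p := by
  rw [P0p, mul_smul_comm, mul_add, mul_one, e0_sq, add_comm]

lemma e0_Pm : e 0 * P0m = -P0m := by
  rw [P0m, mul_smul_comm, mul_sub, mul_one, e0_sq, ← smul_neg, neg_sub]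

lemma Dirac_mul (Ω : (Fin 4 → ℤ) → Cl) (c : Cl) (k : Fin 4 → ℤ) :
    Dirac (fun k => Ω k * c) k = Dirac Ω k * c := by
  simp only [Dirac, Δ, Finset.sum_mul, sub_mul, mul_assoc]

/-- Proposition 3.4: a solution `Ω` of the discrete Joyce equation `iDΩ = mΩe₀`
decomposes as `Ω = ΩP_{+0} + ΩP_{−0}`, where `ΩP_{+0}` satisfies the discrete
Dirac–Kähler equation and `ΩP_{−0}` satisfies it with reversed mass sign. -/
theorem stmt_6 (m : ℝ) (Ω : (Fin 4 → ℤ) → Cl)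
    (hΩ : ∀ k, Complex.I • Dirac Ω k = (m : ℂ) • (Ω k * e 0)) :
    (∀ k, Ω k = Ω k * P0p + Ω k * P0m) ∧
    (∀ k, Complex.I • Dirac (fun k => Ω k * P0p) k = (m : ℂ) • (Ω k * P0p)) ∧
    (∀ k, Complex.I • Dirac (fun k => Ω k * P0m) k = -((m : ℂ) • (Ω k * P0m))) := by
  have h1 : ∀ k, Ω k = Ω k * P0p + Ω k * P0m := by
    intro k; rw [← mul_add, Psum, mul_one]
  refine ⟨h1, ?_, ?_⟩
  · intro k
    rw [Dirac_mul, ← smul_mul_assoc, hΩ, smul_mul_assoc, mul_assoc, e0_Pp]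
  · intro k
    rw [Dirac_mul, ← smul_mul_assoc, hΩ, smul_mul_assoc, mul_assoc, e0_Pm,
      mul_neg, smul_neg]
end
end

section
/- If a discrete form Ω : ℤ⁴ → Cl satisfies the discrete Hestenes equation −(DΩ)e₁e₂ = mΩe₀, then the form Ωe₂e₃ satisfies the same equation with the sign of the mass term reversed: −(D(Ωe₂e₃))e₁e₂ = −m(Ωe₂e₃)e₀. -/
noncomputable section

lemma e_anticomm {μ ν : Fin 4} (h : μ ≠ ν) : e μ * e ν = -(e ν * e μ) := by
  have := CliffordAlgebra.ι_mul_ι_add_swap (Q := Q) (Pi.single μ 1) (Pi.single ν 1)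
  have hp : QuadraticMap.polar Q (Pi.single μ 1) (Pi.single ν 1) = 0 := by
    simp only [QuadraticMap.polar, Q, QuadraticMap.weightedSumSquares_apply,
      Fin.sum_univ_four]
    fin_cases μ <;> fin_cases ν <;> simp_all
  rw [hp] at this
  simp only [map_zero] at this
  unfold e
  exact eq_neg_of_add_eq_zero_left this

lemma e_sq (μ : Fin 4) (h : μ ≠ 0) : e μ * e μ = -1 := by
  have := CliffordAlgebra.ι_sq_scalar (Q := Q) (Pi.single μ 1)
  have hq : Q (Pi.single μ 1) = -1 := by
    simp only [Q, QuadraticMap.weightedSumSquares_apply, Fin.sum_univ_four]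
    fin_cases μ <;> simp_all
  rw [hq] at this
  unfold e
  rw [this]
  simp

lemma h1 : (e 2 * e 3) * (e 1 * e 2) = e 1 * e 3 := by
  have a31 := e_anticomm (show (3:Fin 4) ≠ 1 by decide)
  have a32 := e_anticomm (show (3:Fin 4) ≠ 2 by decide)
  have a21 := e_anticomm (show (2:Fin 4) ≠ 1 by decide)
  have s2 := e_sq 2 (by decide)
  calc (e 2 * e 3) * (e 1 * e 2) = e 2 * (e 3 * e 1) * e 2 := by noncomm_ring
  _ = e 2 * (-(e 1 * e 3)) * e 2 := by rw [a31]
  _ = -((e 2 * e 1) * (e 3 * e 2)) := by noncomm_ring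
  _ = -((e 2 * e 1) * (-(e 2 * e 3))) := by rw [a32]
  _ = (e 2 * e 1) * e 2 * e 3 := by noncomm_ring
  _ = (-(e 1 * e 2)) * e 2 * e 3 := by rw [a21]
  _ = -(e 1 * (e 2 * e 2) * e 3) := by noncomm_ring
  _ = -(e 1 * (-1) * e 3) := by rw [s2]
  _ = e 1 * e 3 := by noncomm_ring

lemma h2 : (e 1 * e 2) * (e 2 * e 3) = -(e 1 * e 3) := by
  have s2 := e_sq 2 (by decide)
  calc (e 1 * e 2) * (e 2 * e 3) = e 1 * (e 2 * e 2) * e 3 := by noncomm_ring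
  _ = e 1 * (-1) * e 3 := by rw [s2]
  _ = -(e 1 * e 3) := by noncomm_ring

lemma h3 : e 0 * (e 2 * e 3) = (e 2 * e 3) * e 0 := by
  have a02 := e_anticomm (show (0:Fin 4) ≠ 2 by decide)
  have a03 := e_anticomm (show (0:Fin 4) ≠ 3 by decide)
  calc e 0 * (e 2 * e 3) = (e 0 * e 2) * e 3 := by noncomm_ring
  _ = (-(e 2 * e 0)) * e 3 := by rw [a02]
  _ = -(e 2 * (e 0 * e 3)) := by noncomm_ring
  _ = -(e 2 * (-(e 3 * e 0))) := by rw [a03]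
  _ = (e 2 * e 3) * e 0 := by noncomm_ring

/-- If `Ω` satisfies the discrete Hestenes equation `−(DΩ)e₁e₂ = mΩe₀`, then
`Ωe₂e₃` satisfies it with the sign of the mass term reversed. -/
theorem stmt_9 (m : ℝ) (Ω : (Fin 4 → ℤ) → Cl)
    (hΩ : ∀ k, -(Dirac Ω k * (e 1 * e 2)) = (m : ℂ) • (Ω k * e 0)) :
    ∀ k, -(Dirac (fun k => Ω k * (e 2 * e 3)) k * (e 1 * e 2)) =
      -((m : ℂ) • ((Ω k * (e 2 * e 3)) * e 0)) := by
  intro k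
  rw [Dirac_mul]
  have key : Dirac Ω k * (e 2 * e 3) * (e 1 * e 2)
      = -(Dirac Ω k * (e 1 * e 2)) * (e 2 * e 3) := by
    rw [mul_assoc, h1, neg_mul, mul_assoc, h2]
    noncomm_ring
  rw [key, hΩ k]
  have h3' : Ω k * e 0 * (e 2 * e 3) = Ω k * (e 2 * e 3 * e 0) := by
    rw [mul_assoc, h3, ← mul_assoc, mul_assoc]
  rw [smul_mul_assoc, h3', mul_assoc, mul_assoc, mul_assoc]
end
end
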